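/- Numerator formula for the derivative: for a rational Bézier curve of degree n, ω(t)^2 · r'(t) = ∑_{i=0}^{2n-2} B_i^{2n-2}(t) D_i, where D_i = (1/C(2n−2,i)) ∑_{j=max(0,i−n+1)}^{⌊i/2⌋} (i−2j+1) C(n,j) C(n,i−j+1) ω_j ω_{i−j+1} (p_{i−j+1} − p_j), valid for the case n = 2 (i.e., ω(t)^2 r'(t) = ∑_{i=0}^{2} B_i^2(t) D_i). -/

import Mathlib

/-- Bernstein polynomial `B_i^n(t) = C(n,i) t^i (1-t)^(n-i)`. -/
def bern (n i : ℕ) (t : ℝ) : ℝ := (n.choose i : ℝ) * t ^ i * (1 - t) ^ (n - i)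

theorem stmt_16 {E : Type*} [NormedAddCommGroup E] [NormedSpace ℝ E]
    (ω : ℕ → ℝ) (hω : ∀ i ≤ 2, 0 < ω i) (p : ℕ → E)
    (w : ℝ → ℝ) (hw : w = fun t => ∑ i ∈ Finset.range 3, ω i * bern 2 i t)
    (r : ℝ → E)
    (hr : r = fun t => (w t)⁻¹ • ∑ i ∈ Finset.range 3, (ω i * bern 2 i t) • p i)
    (D : ℕ → E)
    (hD : D = fun i => (1 / ((2 : ℕ).choose i : ℝ)) •
      ∑ j ∈ Finset.Icc (i - 1) (i / 2),
        (((i : ℝ) - 2 * (j : ℝ) + 1) * ((2 : ℕ).choose j : ℝ) *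
          ((2 : ℕ).choose (i - j + 1) : ℝ) * ω j * ω (i - j + 1)) •
          (p (i - j + 1) - p j)) :
    ∀ t ∈ Set.Icc (0 : ℝ) 1,
      (w t) ^ 2 • deriv r t = ∑ i ∈ Finset.range 3, bern 2 i t • D i := by
  intro t ht
  have h0 := hω 0 (by norm_num)
  have h1 := hω 1 (by norm_num)
  have h2 := hω 2 (by norm_num)
  have hwt : w t = ω 0 * (1 - t) ^ 2 + ω 1 * 2 * (t * (1 - t)) + ω 2 * t ^ 2 := by
    rw [hw]; simp [Finset.sum_range_succ, bern]; ring
  have hW : w t ≠ 0 := by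
    rw [hwt]
    have h1t : 0 ≤ t * (1 - t) := mul_nonneg ht.1 (by linarith [ht.2])
    rcases le_or_gt t (1/2) with h | h
    · have hq : (1/4 : ℝ) ≤ (1 - t) ^ 2 := by nlinarith
      nlinarith [mul_le_mul_of_nonneg_left hq h0.le, mul_nonneg h1.le h1t,
        mul_nonneg h2.le (sq_nonneg t)]
    · have hq : (1/4 : ℝ) ≤ t ^ 2 := by nlinarith
      nlinarith [mul_le_mul_of_nonneg_left hq h2.le, mul_nonneg h1.le h1t,
        mul_nonneg h0.le (sq_nonneg (1 - t))]
  -- rewrite r as inverse of w times a sum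
  have hwfun : w = fun s => ω 0 * (1 - s) ^ 2 + ω 1 * 2 * (s * (1 - s)) + ω 2 * s ^ 2 := by
    rw [hw]; funext s; simp [Finset.sum_range_succ, bern]; ring
  have hrfun : r = fun s => (w s)⁻¹ •
      ((ω 0 * (1 - s) ^ 2) • p 0 + (ω 1 * 2 * (s * (1 - s))) • p 1 + (ω 2 * s ^ 2) • p 2) := by
    rw [hr]; funext s
    congr 1
    simp [Finset.sum_range_succ, bern]
    module
  -- derivatives of the scalar coefficient functions
  have hd0 : HasDerivAt (fun s : ℝ => ω 0 * (1 - s) ^ 2) (ω 0 * (2 * (1 - t) ^ 1 * (-1))) t :=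
    (((hasDerivAt_id t).const_sub 1).pow 2).const_mul (ω 0)
  have hd1 : HasDerivAt (fun s : ℝ => ω 1 * 2 * (s * (1 - s)))
      (ω 1 * 2 * (1 * (1 - t) + t * (-1))) t :=
    ((hasDerivAt_id t).mul ((hasDerivAt_id t).const_sub 1)).const_mul (ω 1 * 2)
  have hd2 : HasDerivAt (fun s : ℝ => ω 2 * s ^ 2) (ω 2 * (2 * t ^ 1)) t := by
    simpa using (hasDerivAt_pow 2 t).const_mul (ω 2)
  have hwD : HasDerivAt w
      (ω 0 * (2 * (1 - t) ^ 1 * (-1)) + ω 1 * 2 * (1 * (1 - t) + t * (-1)) + ω 2 * (2 * t ^ 1)) t := by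
    rw [hwfun]; exact (hd0.add hd1).add hd2
  have hPD : HasDerivAt (fun s : ℝ =>
      (ω 0 * (1 - s) ^ 2) • p 0 + (ω 1 * 2 * (s * (1 - s))) • p 1 + (ω 2 * s ^ 2) • p 2)
      ((ω 0 * (2 * (1 - t) ^ 1 * (-1))) • p 0 + (ω 1 * 2 * (1 * (1 - t) + t * (-1))) • p 1
        + (ω 2 * (2 * t ^ 1)) • p 2) t :=
    ((hd0.smul_const (p 0)).add (hd1.smul_const (p 1))).add (hd2.smul_const (p 2))
  set w' := ω 0 * (2 * (1 - t) ^ 1 * (-1)) + ω 1 * 2 * (1 * (1 - t) + t * (-1)) + ω 2 * (2 * t ^ 1) with hw'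
  set P := (ω 0 * (1 - t) ^ 2) • p 0 + (ω 1 * 2 * (t * (1 - t))) • p 1 + (ω 2 * t ^ 2) • p 2 with hP
  set P' := (ω 0 * (2 * (1 - t) ^ 1 * (-1))) • p 0 + (ω 1 * 2 * (1 * (1 - t) + t * (-1))) • p 1
      + (ω 2 * (2 * t ^ 1)) • p 2 with hP'
  have hrD : HasDerivAt r ((w t)⁻¹ • P' + (-w' / w t ^ 2) • P) t := by
    rw [hrfun]
    exact (hwD.inv hW).smul hPD
  rw [hrD.deriv, smul_add, smul_smul, smul_smul]
  have e1 : w t ^ 2 * (w t)⁻¹ = w t := by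
    rw [sq, mul_assoc, mul_inv_cancel₀ hW, mul_one]
  have e2 : w t ^ 2 * (-w' / w t ^ 2) = -w' := by
    field_simp
  rw [e1, e2]
  -- evaluate the right-hand side
  have hD0 : D 0 = (2 * (ω 0 * ω 1)) • (p 1 - p 0) := by
    rw [hD]; norm_num; module
  have hD1 : D 1 = (ω 0 * ω 2) • (p 2 - p 0) := by
    rw [hD]; norm_num; module
  have hD2 : D 2 = (2 * (ω 1 * ω 2)) • (p 2 - p 1) := by
    rw [hD]
    norm_num [Finset.Icc_self]
    module
  rw [Finset.sum_range_succ, Finset.sum_range_succ, Finset.sum_range_succ,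
    Finset.sum_range_zero, hD0, hD1, hD2, hwt, hP, hP', hw']
  simp only [bern]
  norm_num
  module
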